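/- arXiv:1809.03733 — 3 statements merged into one kernel-verified Lean document; each statement's English description precedes it below -/
import Mathlib

section
/- Let J ∈ ℝ^{m×m} satisfy J + Jᵀ > 0 (positive definite), and let Z ∈ ℝ^{m×m} satisfy Z + Zᵀ ≥ 0 (positive semidefinite). Then the matrix I + J Z is invertible. -/
open Matrix

theorem stmt2 (m : ℕ) (J Z : Matrix (Fin m) (Fin m) ℝ)
    (hJ : (J + Jᵀ).PosDef) (hZ : (Z + Zᵀ).PosSemidef) :
    IsUnit (1 + J * Z) := by
  rw [Matrix.isUnit_iff_isUnit_det, isUnit_iff_ne_zero]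
  intro hdet
  obtain ⟨v, hv, hmv⟩ := (Matrix.exists_mulVec_eq_zero_iff).2 hdet
  set y := Z *ᵥ v with hy
  have h1 : v + J *ᵥ y = 0 := by
    rw [hy, Matrix.mulVec_mulVec]
    rw [Matrix.add_mulVec, Matrix.one_mulVec] at hmv
    exact hmv
  have h2 : y ⬝ᵥ v + y ⬝ᵥ (J *ᵥ y) = 0 := by
    have := congrArg (fun w => y ⬝ᵥ w) h1
    simpa [dotProduct_add] using this
  have hyv : 0 ≤ y ⬝ᵥ v := by
    have h := hZ.dotProduct_mulVec_nonneg v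
    simp only [star_trivial] at h
    rw [Matrix.add_mulVec, dotProduct_add] at h
    have e1 : v ⬝ᵥ (Zᵀ *ᵥ v) = y ⬝ᵥ v := by
      rw [Matrix.mulVec_transpose, dotProduct_comm, ← Matrix.dotProduct_mulVec, dotProduct_comm]
    have e2 : v ⬝ᵥ (Z *ᵥ v) = y ⬝ᵥ v := dotProduct_comm _ _
    linarith
  have hy0 : y = 0 := by
    by_contra hne
    have h := hJ.dotProduct_mulVec_pos hne
    simp only [star_trivial] at h
    rw [Matrix.add_mulVec, dotProduct_add] at h
    have e1 : y ⬝ᵥ (Jᵀ *ᵥ y) = y ⬝ᵥ (J *ᵥ y) := by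
      rw [Matrix.mulVec_transpose, dotProduct_comm, ← Matrix.dotProduct_mulVec, dotProduct_comm]
    linarith
  apply hv
  have : v + J *ᵥ (0 : Fin m → ℝ) = 0 := hy0 ▸ h1
  simpa using this
end

section
/- Let J, Z ∈ ℝ^{m×m} with J + Jᵀ > 0 and Z + Zᵀ ≥ 0, and set δ = Z(I + JZ)^{-1}. Then δ satisfies the quadratic matrix inequality δ (J + Jᵀ) δᵀ ≤ δ + δᵀ. -/
open Matrix

theorem stmt3 (m : ℕ) (J Z : Matrix (Fin m) (Fin m) ℝ)
    (hJ : (J + Jᵀ).PosDef) (hZ : (Z + Zᵀ).PosSemidef)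
    (δ : Matrix (Fin m) (Fin m) ℝ) (hδ : δ = Z * (1 + J * Z)⁻¹) :
    (δ + δᵀ - δ * (J + Jᵀ) * δᵀ).PosSemidef := by
  -- Step 1: 1 + J * Z is invertible
  have hdet : (1 + J * Z).det ≠ 0 := by
    intro h
    rw [← Matrix.exists_mulVec_eq_zero_iff] at h
    obtain ⟨v, hv, hv0⟩ := h
    set y := Z *ᵥ v with hy
    have hvJy : v = -(J *ᵥ y) := by
      have h0 : v + J *ᵥ y = 0 := by
        simpa [Matrix.add_mulVec, Matrix.mulVec_mulVec, Matrix.one_mulVec, hy] using hv0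
      linear_combination (norm := module) h0
    -- quadratic form computations
    have hZv : (0:ℝ) ≤ 2 * (v ⬝ᵥ y) := by
      have := hZ.dotProduct_mulVec_nonneg v
      simp only [star_trivial] at this
      have e1 : v ⬝ᵥ ((Z + Zᵀ) *ᵥ v) = 2 * (v ⬝ᵥ y) := by
        rw [Matrix.add_mulVec, dotProduct_add, Matrix.mulVec_transpose,
          Matrix.dotProduct_mulVec v Z v, dotProduct_comm]
        ring
      rw [e1] at this
      exact this
    have hy0 : y = 0 := by
      by_contra hyne
      have hpos := hJ.dotProduct_mulVec_pos hyne
      simp only [star_trivial] at hpos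
      have e2 : y ⬝ᵥ ((J + Jᵀ) *ᵥ y) = 2 * (y ⬝ᵥ (J *ᵥ y)) := by
        rw [Matrix.add_mulVec, dotProduct_add, Matrix.mulVec_transpose,
          Matrix.dotProduct_mulVec y J y, dotProduct_comm (y ᵥ* J) y]
        ring
      have e3 : v ⬝ᵥ y = -(y ⬝ᵥ (J *ᵥ y)) := by
        rw [hvJy, neg_dotProduct, dotProduct_comm]
      rw [e2] at hpos
      rw [e3] at hZv
      linarith
    apply hv
    rw [hvJy, hy0]
    simp
  -- Step 2: 1 + Z * J is invertible
  have hdet' : (1 + Z * J).det ≠ 0 := by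
    rw [Matrix.det_one_add_mul_comm]; exact hdet
  set A := 1 + Z * J with hA
  -- Step 3: A * δ = Z
  have hAδ : A * δ = Z := by
    rw [hδ, hA, ← mul_assoc]
    have : (1 + Z * J) * Z = Z * (1 + J * Z) := by noncomm_ring
    rw [this, mul_assoc, Matrix.mul_nonsing_inv _ (isUnit_iff_ne_zero.mpr hdet), mul_one]
  have hδt : δᵀ * Aᵀ = Zᵀ := by rw [← transpose_mul, hAδ]
  -- Step 4: conjugation identity
  have hmid : A * (δ + δᵀ - δ * (J + Jᵀ) * δᵀ) * Aᵀ = Z + Zᵀ := by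
    have expand : A * (δ + δᵀ - δ * (J + Jᵀ) * δᵀ) * Aᵀ
        = (A * δ) * Aᵀ + A * (δᵀ * Aᵀ) - (A * δ) * (J + Jᵀ) * (δᵀ * Aᵀ) := by
      noncomm_ring
    rw [expand, hAδ, hδt, hA]
    have hAt : (1 + Z * J)ᵀ = 1 + Jᵀ * Zᵀ := by
      simp [transpose_add, transpose_mul]
    rw [hAt]
    noncomm_ring
  have h1 : A⁻¹ * A = 1 := Matrix.nonsing_inv_mul _ (isUnit_iff_ne_zero.mpr hdet')
  have h2 : Aᵀ * (Aᵀ)⁻¹ = 1 := Matrix.mul_nonsing_inv _ (by rw [Matrix.det_transpose]; exact isUnit_iff_ne_zero.mpr hdet')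
  have hE : δ + δᵀ - δ * (J + Jᵀ) * δᵀ = A⁻¹ * (Z + Zᵀ) * (A⁻¹)ᵀ := by
    have := congrArg (fun X => A⁻¹ * X * (Aᵀ)⁻¹) hmid
    rw [Matrix.transpose_nonsing_inv]
    calc δ + δᵀ - δ * (J + Jᵀ) * δᵀ
        = A⁻¹ * A * (δ + δᵀ - δ * (J + Jᵀ) * δᵀ) * (Aᵀ * (Aᵀ)⁻¹) := by
          rw [h1, h2, one_mul, mul_one]
      _ = A⁻¹ * (A * (δ + δᵀ - δ * (J + Jᵀ) * δᵀ) * Aᵀ) * (Aᵀ)⁻¹ := by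
          simp only [mul_assoc]
      _ = A⁻¹ * (Z + Zᵀ) * (Aᵀ)⁻¹ := by rw [hmid]
  rw [hE]
  have := hZ.mul_mul_conjTranspose_same A⁻¹
  simpa using this
end

section
/- Conversely, let δ ∈ ℝ^{m×m} satisfy det(I − δJ) ≠ 0 and δ(J + Jᵀ)δᵀ ≤ δ + δᵀ, where J + Jᵀ > 0. Then Z := δ(I − Jδ)^{-1} satisfies Z + Zᵀ ≥ 0 and δ = Z(I + JZ)^{-1}. -/
open Matrix

theorem stmt4 (m : ℕ) (J δ : Matrix (Fin m) (Fin m) ℝ)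
    (hJ : (J + Jᵀ).PosDef)
    (hdet : (1 - δ * J).det ≠ 0)
    (hq : (δ + δᵀ - δ * (J + Jᵀ) * δᵀ).PosSemidef)
    (Z : Matrix (Fin m) (Fin m) ℝ) (hZ : Z = δ * (1 - J * δ)⁻¹) :
    (Z + Zᵀ).PosSemidef ∧ δ = Z * (1 + J * Z)⁻¹ := by
  have hB : IsUnit (1 - δ * J).det := isUnit_iff_ne_zero.mpr hdet
  have hdetA : (1 - J * δ).det = (1 - δ * J).det := by
    have := Matrix.det_one_add_mul_comm J (-δ)
    simpa [mul_neg, neg_mul, sub_eq_add_neg] using this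
  have hA : IsUnit (1 - J * δ).det := by rw [hdetA]; exact hB
  -- push-through identity
  have hcomm : (1 - δ * J) * δ = δ * (1 - J * δ) := by
    simp [sub_mul, mul_sub, mul_assoc]
  have key : (1 - δ * J) * (δ * (1 - J * δ)⁻¹) = δ := by
    rw [← mul_assoc, hcomm, mul_assoc, Matrix.mul_nonsing_inv _ hA, mul_one]
  have push : δ * (1 - J * δ)⁻¹ = (1 - δ * J)⁻¹ * δ := by
    have := congrArg (fun X => (1 - δ * J)⁻¹ * X) key
    simpa [← mul_assoc, Matrix.nonsing_inv_mul _ hB] using this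
  constructor
  · -- PSD part
    have hQ : δ + δᵀ - δ * (J + Jᵀ) * δᵀ
        = δ * (1 - δ * J)ᵀ + (1 - δ * J) * δᵀ := by
      simp [Matrix.transpose_sub, Matrix.transpose_mul, mul_sub, sub_mul,
        mul_add, add_mul, mul_assoc]
      abel
    have hZt : Zᵀ = δᵀ * ((1 - δ * J)⁻¹)ᵀ := by
      rw [hZ, push, Matrix.transpose_mul]
    have hfact : Z + Zᵀ = (1 - δ * J)⁻¹ * (δ + δᵀ - δ * (J + Jᵀ) * δᵀ)
        * ((1 - δ * J)⁻¹)ᵀ := by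
      rw [hQ, hZ, push, Matrix.transpose_mul]
      rw [mul_add, add_mul, mul_assoc, mul_assoc]
      congr 1
      · rw [← Matrix.transpose_mul, Matrix.nonsing_inv_mul _ hB]
        simp
      · rw [← mul_assoc, Matrix.nonsing_inv_mul _ hB, one_mul]
    rw [hfact]
    have := hq.mul_mul_conjTranspose_same (1 - δ * J)⁻¹
    simpa [Matrix.conjTranspose_eq_transpose_of_trivial] using this
  · -- δ = Z (1 + J Z)⁻¹
    have h1 : 1 + J * Z = (1 - J * δ)⁻¹ := by
      rw [hZ, ← mul_assoc]
      have : (1 - J * δ) * (1 + J * δ * (1 - J * δ)⁻¹) = 1 := by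
        rw [mul_add, mul_one, ← mul_assoc]
        have : (1 - J * δ) * (J * δ) = (J * δ) * (1 - J * δ) := by
          simp [sub_mul, mul_sub, mul_assoc]
        rw [this, mul_assoc, Matrix.mul_nonsing_inv _ hA]
        simp
      calc 1 + J * δ * (1 - J * δ)⁻¹
          = (1 - J * δ)⁻¹ * ((1 - J * δ) * (1 + J * δ * (1 - J * δ)⁻¹)) := by
            rw [← mul_assoc, Matrix.nonsing_inv_mul _ hA, one_mul]
        _ = (1 - J * δ)⁻¹ := by rw [this, mul_one]
    rw [h1, Matrix.nonsing_inv_nonsing_inv _ hA, hZ, mul_assoc,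
      Matrix.nonsing_inv_mul _ hA, mul_one]
end
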